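/- Let Q₁,…,Q_{n−1} be matrices with orthonormal rows or columns appropriately (each ‖Qⱼ‖₂ = 1 and ‖Qⱼ‖_F ≤ √D), and Qₙ arbitrary with product C = Q₁⋯Qₙ satisfying ‖C‖_F = ‖Qₙ‖_F. If each Qⱼ is perturbed by δⱼ with ‖δⱼ‖_F ≤ ε‖Qⱼ‖_F, then the first-order relative error satisfies ‖Σⱼ Q₁⋯Q_{j−1} δⱼ Q_{j+1}⋯Qₙ‖_F / ‖C‖_F ≤ ε(1 + (n−1)√D). -/

import Mathlib

open Matrix BigOperators

noncomputable def frob {m n : Type*} [Fintype m] [Fintype n] (A : Matrix m n ℝ) : ℝ :=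
  Real.sqrt (∑ i, ∑ j, (A i j) ^ 2)

noncomputable def spec {m n : Type*} [Fintype m] [Fintype n] [DecidableEq n]
    (A : Matrix m n ℝ) : ℝ :=
  ‖LinearMap.toContinuousLinearMap (Matrix.toEuclideanLin A)‖

noncomputable def prodRange {d : ℕ} (A : ℕ → Matrix (Fin d) (Fin d) ℝ) (a l : ℕ) :
    Matrix (Fin d) (Fin d) ℝ :=
  ((List.range l).map fun i => A (a + i)).prod

lemma frob_nonneg {m n : Type*} [Fintype m] [Fintype n] (A : Matrix m n ℝ) : 0 ≤ frob A :=
  Real.sqrt_nonneg _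

section SpecLemmas

open scoped Matrix.Norms.L2Operator

variable {m n l : Type*} [Fintype m] [Fintype n] [Fintype l]

lemma spec_eq [DecidableEq n] (A : Matrix m n ℝ) : spec A = ‖A‖ := rfl

lemma spec_nonneg [DecidableEq n] (A : Matrix m n ℝ) : 0 ≤ spec A := by
  rw [spec_eq]; exact norm_nonneg _

lemma spec_mul_le [DecidableEq n] [DecidableEq l] (A : Matrix m n ℝ) (B : Matrix n l ℝ) :
    spec (A * B) ≤ spec A * spec B := by
  simp only [spec_eq]; exact Matrix.l2_opNorm_mul A B

lemma spec_one_le {d : ℕ} : spec (1 : Matrix (Fin d) (Fin d) ℝ) ≤ 1 := by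
  rw [spec_eq, Matrix.cstar_norm_def, _root_.map_one]
  exact ContinuousLinearMap.norm_id_le

lemma spec_transpose [DecidableEq m] [DecidableEq n] (A : Matrix m n ℝ) :
    spec Aᵀ = spec A := by
  have h := Matrix.l2_opNorm_conjTranspose A
  rw [A.conjTranspose_eq_transpose_of_trivial] at h
  simpa only [spec_eq] using h

lemma sum_sq_mulVec_le [DecidableEq n] (A : Matrix m n ℝ) (v : n → ℝ) :
    ∑ i, ((A *ᵥ v) i) ^ 2 ≤ spec A ^ 2 * ∑ j, (v j) ^ 2 := by
  have h := Matrix.l2_opNorm_mulVec A ((EuclideanSpace.equiv n ℝ).symm v)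
  rw [← spec_eq] at h
  have hv : (EuclideanSpace.equiv n ℝ) ((EuclideanSpace.equiv n ℝ).symm v) = v :=
    (EuclideanSpace.equiv n ℝ).apply_symm_apply v
  have hnx : ‖(EuclideanSpace.equiv n ℝ).symm v‖ = Real.sqrt (∑ j, (v j) ^ 2) := by
    rw [EuclideanSpace.norm_eq]
    simp [Real.norm_eq_abs, sq_abs]
  have hny : ‖(EuclideanSpace.equiv m ℝ).symm (A *ᵥ ((EuclideanSpace.equiv n ℝ).symm v))‖
      = Real.sqrt (∑ i, ((A *ᵥ v) i) ^ 2) := by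
    rw [EuclideanSpace.norm_eq]
    simp [Real.norm_eq_abs, sq_abs]
  rw [hny, hnx] at h
  have h1 : (0:ℝ) ≤ ∑ i, ((A *ᵥ v) i) ^ 2 := Finset.sum_nonneg fun _ _ => sq_nonneg _
  have h2 : (0:ℝ) ≤ ∑ j, (v j) ^ 2 := Finset.sum_nonneg fun _ _ => sq_nonneg _
  have := mul_self_le_mul_self (Real.sqrt_nonneg _) h
  rw [Real.mul_self_sqrt h1] at this
  calc ∑ i, ((A *ᵥ v) i) ^ 2 ≤ (spec A * Real.sqrt (∑ j, (v j) ^ 2)) *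
        (spec A * Real.sqrt (∑ j, (v j) ^ 2)) := this
    _ = spec A ^ 2 * (Real.sqrt (∑ j, (v j) ^ 2) * Real.sqrt (∑ j, (v j) ^ 2)) := by ring
    _ = spec A ^ 2 * ∑ j, (v j) ^ 2 := by rw [Real.mul_self_sqrt h2]

lemma frob_mul_le_spec_left [DecidableEq n] (A : Matrix m n ℝ) (B : Matrix n l ℝ) :
    frob (A * B) ≤ spec A * frob B := by
  have key : ∑ i, ∑ j, ((A * B) i j) ^ 2 ≤ spec A ^ 2 * ∑ i, ∑ j, (B i j) ^ 2 := by
    rw [Finset.sum_comm, Finset.sum_comm (γ := n)]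
    rw [Finset.mul_sum]
    refine Finset.sum_le_sum fun j _ => ?_
    have := sum_sq_mulVec_le A (fun k => B k j)
    simpa [Matrix.mul_apply, Matrix.mulVec, dotProduct] using this
  have : frob (A * B) ≤ Real.sqrt (spec A ^ 2 * ∑ i, ∑ j, (B i j) ^ 2) :=
    Real.sqrt_le_sqrt key
  calc frob (A * B) ≤ Real.sqrt (spec A ^ 2 * ∑ i, ∑ j, (B i j) ^ 2) := this
    _ = spec A * frob B := by
        rw [Real.sqrt_mul (sq_nonneg _), Real.sqrt_sq (spec_nonneg A)]; rfl

lemma frob_transpose (A : Matrix m n ℝ) : frob Aᵀ = frob A := by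
  unfold frob
  rw [Finset.sum_comm]
  rfl

lemma frob_mul_le_spec_right [DecidableEq m] [DecidableEq n] [DecidableEq l]
    (A : Matrix m n ℝ) (B : Matrix n l ℝ) :
    frob (A * B) ≤ frob A * spec B := by
  have h := frob_mul_le_spec_left Bᵀ Aᵀ
  rw [← Matrix.transpose_mul, frob_transpose, frob_transpose, spec_transpose] at h
  linarith

end SpecLemmas

section FrobLemmas

attribute [local instance] Matrix.frobeniusNormedAddCommGroup Matrix.frobeniusNormedRing

variable {m n : Type*} [Fintype m] [Fintype n]

lemma frob_eq (A : Matrix m n ℝ) : frob A = ‖A‖ := by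
  rw [Matrix.frobenius_norm_def, frob, Real.sqrt_eq_rpow]
  congr 1
  refine Finset.sum_congr rfl fun i _ => Finset.sum_congr rfl fun j _ => ?_
  rw [Real.rpow_two, Real.norm_eq_abs, sq_abs]

lemma frob_sum_le {ι : Type*} (s : Finset ι) (f : ι → Matrix m n ℝ) :
    frob (∑ j ∈ s, f j) ≤ ∑ j ∈ s, frob (f j) := by
  simp only [frob_eq]
  exact norm_sum_le s f

lemma frob_mul_le [DecidableEq m] (A B : Matrix m m ℝ) :
    frob (A * B) ≤ frob A * frob B := by
  simp only [frob_eq]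
  exact norm_mul_le A B

end FrobLemmas

lemma prodRange_zero {d : ℕ} (A : ℕ → Matrix (Fin d) (Fin d) ℝ) (a : ℕ) :
    prodRange A a 0 = 1 := by simp [prodRange]

lemma prodRange_succ {d : ℕ} (A : ℕ → Matrix (Fin d) (Fin d) ℝ) (a l : ℕ) :
    prodRange A a (l + 1) = prodRange A a l * A (a + l) := by
  simp [prodRange, List.range_succ]

lemma spec_prodRange_le_one {d : ℕ} (Q : ℕ → Matrix (Fin d) (Fin d) ℝ) (a l : ℕ)
    (h : ∀ i, i < l → spec (Q (a + i)) ≤ 1) :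
    spec (prodRange Q a l) ≤ 1 := by
  induction l with
  | zero => rw [prodRange_zero]; exact spec_one_le
  | succ l ih =>
    rw [prodRange_succ]
    calc spec (prodRange Q a l * Q (a + l))
        ≤ spec (prodRange Q a l) * spec (Q (a + l)) := spec_mul_le _ _
      _ ≤ 1 * 1 := by
          refine mul_le_mul (ih fun i hi => h i (Nat.lt_succ_of_lt hi))
            (h l (Nat.lt_succ_self l)) (spec_nonneg _) zero_le_one
      _ = 1 := mul_one 1

theorem stmt9 {d : ℕ} (n D : ℕ) (Q δ : ℕ → Matrix (Fin d) (Fin d) ℝ)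
    (ε : ℝ) (hε : 0 ≤ ε)
    (hiso : ∀ j, j < n - 1 → spec (Q j) = 1 ∧ frob (Q j) ≤ Real.sqrt D)
    (hC : frob (prodRange Q 0 n) = frob (Q (n - 1)))
    (hδ : ∀ j < n, frob (δ j) ≤ ε * frob (Q j)) :
    frob (∑ j ∈ Finset.range n,
        prodRange Q 0 j * δ j * prodRange Q (j + 1) (n - (j + 1))) ≤
      ε * (1 + (n - 1 : ℕ) * Real.sqrt D) * frob (prodRange Q 0 n) := by
  have hF0 : 0 ≤ frob (prodRange Q 0 n) := frob_nonneg _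
  rcases n with _ | m
  · simp only [Finset.range_zero, Finset.sum_empty]
    have h0 : frob (0 : Matrix (Fin d) (Fin d) ℝ) = 0 := by simp [frob]
    rw [h0]
    have : (0:ℝ) ≤ 1 + ((0 - 1 : ℕ) : ℝ) * Real.sqrt D := by norm_num
    exact mul_nonneg (mul_nonneg hε this) hF0
  · set F := frob (prodRange Q 0 (m + 1)) with hFdef
    have hQm : frob (Q m) = F := by
      rw [hC]; norm_num
    have hiso' : ∀ j, j < m → spec (Q j) = 1 ∧ frob (Q j) ≤ Real.sqrt D := by
      intro j hj; exact hiso j (by omega)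
    -- spec of any left partial product is ≤ 1, while indices stay below m
    have hL : ∀ j, j ≤ m → spec (prodRange Q 0 j) ≤ 1 := by
      intro j hj
      refine spec_prodRange_le_one Q 0 j fun i hi => ?_
      exact le_of_eq (hiso' (0 + i) (by omega)).1
    have hterm : ∀ j ∈ Finset.range (m + 1),
        frob (prodRange Q 0 j * δ j * prodRange Q (j + 1) (m + 1 - (j + 1))) ≤
          (if j = m then ε * F else ε * Real.sqrt D * F) := by
      intro j hj
      rw [Finset.mem_range] at hj
      by_cases hjm : j = m
      · rw [if_pos hjm, hjm]
        have he : m + 1 - (m + 1) = 0 := by omega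
        rw [he, prodRange_zero, mul_one]
        calc frob (prodRange Q 0 m * δ m)
            ≤ spec (prodRange Q 0 m) * frob (δ m) := frob_mul_le_spec_left _ _
          _ ≤ 1 * frob (δ m) :=
              mul_le_mul_of_nonneg_right (hL m le_rfl) (frob_nonneg _)
          _ = frob (δ m) := one_mul _
          _ ≤ ε * frob (Q m) := hδ m (by omega)
          _ = ε * F := by rw [hQm]
      · rw [if_neg hjm]
        have hjm' : j < m := by omega
        -- split the right product:  prodRange Q (j+1) (m-j) = prodRange Q (j+1) (m-j-1) * Q m
        have hlen : m + 1 - (j + 1) = (m - j - 1) + 1 := by omega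
        have hidx : j + 1 + (m - j - 1) = m := by omega
        rw [hlen, prodRange_succ, hidx]
        set L := prodRange Q 0 j
        set P := prodRange Q (j + 1) (m - j - 1)
        have hP : spec P ≤ 1 := by
          refine spec_prodRange_le_one Q (j + 1) (m - j - 1) fun i hi => ?_
          exact le_of_eq (hiso' (j + 1 + i) (by omega)).1
        have hLj : spec L ≤ 1 := hL j (by omega)
        have hδj : frob (δ j) ≤ ε * Real.sqrt D := by
          calc frob (δ j) ≤ ε * frob (Q j) := hδ j (by omega)
            _ ≤ ε * Real.sqrt D :=
                mul_le_mul_of_nonneg_left (hiso' j hjm').2 hε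
        have hassoc : L * δ j * (P * Q m) = L * (δ j * P) * Q m := by
          simp [mul_assoc]
        rw [hassoc]
        have hmid : frob (L * (δ j * P)) ≤ ε * Real.sqrt D := by
          calc frob (L * (δ j * P)) ≤ spec L * frob (δ j * P) := frob_mul_le_spec_left _ _
            _ ≤ 1 * frob (δ j * P) :=
                mul_le_mul_of_nonneg_right hLj (frob_nonneg _)
            _ = frob (δ j * P) := one_mul _
            _ ≤ frob (δ j) * spec P := frob_mul_le_spec_right _ _
            _ ≤ frob (δ j) * 1 :=
                mul_le_mul_of_nonneg_left hP (frob_nonneg _)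
            _ = frob (δ j) := mul_one _
            _ ≤ ε * Real.sqrt D := hδj
        calc frob (L * (δ j * P) * Q m)
            ≤ frob (L * (δ j * P)) * frob (Q m) := frob_mul_le _ _
          _ ≤ (ε * Real.sqrt D) * frob (Q m) :=
              mul_le_mul_of_nonneg_right hmid (frob_nonneg _)
          _ = ε * Real.sqrt D * F := by rw [hQm]
    calc frob (∑ j ∈ Finset.range (m + 1),
            prodRange Q 0 j * δ j * prodRange Q (j + 1) (m + 1 - (j + 1)))
        ≤ ∑ j ∈ Finset.range (m + 1),
            frob (prodRange Q 0 j * δ j * prodRange Q (j + 1) (m + 1 - (j + 1))) :=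
          frob_sum_le _ _
      _ ≤ ∑ j ∈ Finset.range (m + 1), (if j = m then ε * F else ε * Real.sqrt D * F) :=
          Finset.sum_le_sum hterm
      _ = (∑ j ∈ Finset.range m, (if j = m then ε * F else ε * Real.sqrt D * F))
            + ε * F := by rw [Finset.sum_range_succ, if_pos rfl]
      _ = (m : ℝ) * (ε * Real.sqrt D * F) + ε * F := by
          rw [Finset.sum_congr rfl fun j hj => if_neg (by
            rw [Finset.mem_range] at hj; omega)]
          rw [Finset.sum_const, Finset.card_range, nsmul_eq_mul]
      _ = ε * (1 + ((m + 1 - 1 : ℕ) : ℝ) * Real.sqrt D) * F := by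
          push_cast [Nat.add_sub_cancel]
          ring
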